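/- Let f : Y → X be a proper surjective morphism of integral schemes with X normal. Then the natural map from Cartier divisors on X to Cartier divisors on Y (given by pullback) is injective; equivalently, a Cartier divisor D on X is trivial if and only if f*D is trivial on Y. -/

import Mathlib

open AlgebraicGeometry CategoryTheory TopologicalSpace Opposite

/-!
Statement 4: `f : Y → X` proper surjective between integral schemes with `X` normal;
then pullback of Cartier divisors along `f` is injective; equivalently, a Cartier
divisor `D` on `X` is trivial iff `f*D` is trivial on `Y`.

On an integral scheme a Cartier divisor is given by local equations in the function
field; it is trivial iff the local equation is a unit of the local ring at every
point; the pullback along the dominant morphism `f` has local equation the image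
under the induced field map `K(X) → K(Y)`.  Normality of `X` is expressed by all
local rings being integrally closed domains.
-/

namespace Statement4

noncomputable section

variable (X : Scheme) [IrreducibleSpace X]

/-- `g ∈ K(X)` is a unit at `x`, i.e. lies in the image of `O_{X,x}` as a unit. -/
def IsUnitAt (x : X) (g : X.functionField) : Prop :=
  ∃ u : (X.presheaf.stalk x)ˣ, algebraMap (X.presheaf.stalk x) X.functionField u = g

/-- A Cartier divisor on an irreducible (integral) scheme, given by local equations
in the function field. -/
structure CartierDiv where
  eqn : X → X.functionFieldˣ
  isLocal : ∀ x : X, ∃ U : X.Opens, x ∈ U ∧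
    ∀ y ∈ U, IsUnitAt X y ((eqn x : X.functionField) * ((eqn y)⁻¹ : X.functionFieldˣ))

/-- A Cartier divisor is trivial if its local equation is a unit of the local ring at
every point (i.e. its support is empty). -/
def CartierDiv.IsTrivial (D : CartierDiv X) : Prop := ∀ x : X, IsUnitAt X x (D.eqn x)

variable {X} {Y : Scheme} [IrreducibleSpace Y]

/-- The induced map on function fields of a morphism sending the generic point to the
generic point (e.g. any dominant morphism of integral schemes). -/
def ffMap (f : Y ⟶ X) (hg : f.base (genericPoint Y) = genericPoint X) :
    X.functionField ⟶ Y.functionField :=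
  (X.presheaf.stalkCongr (Inseparable.of_eq hg.symm)).hom ≫ f.stalkMap (genericPoint Y)

/-- The pullback `f*D` is trivial if its local equation is a unit of the local ring of
`Y` at every point. -/
def PullbackIsTrivial (f : Y ⟶ X) (hg : f.base (genericPoint Y) = genericPoint X)
    (D : CartierDiv X) : Prop :=
  ∀ y : Y, IsUnitAt Y y (ffMap f hg (D.eqn (f.base y) : X.functionField))


section AlgebraAux

open IsLocalRing Polynomial

/-- If `x` is integral over the range of an injective ring hom `ψ`, then it is an integral
element for `ψ`. -/
lemma isIntegralElem_of_isIntegral_range {O L : Type*} [CommRing O] [CommRing L] (ψ : O →+* L)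
    (hinj : Function.Injective ψ) {x : L} (h : IsIntegral (ψ.range) x) : ψ.IsIntegralElem x := by
  obtain ⟨p, hmonic, heval⟩ := h
  have hbij : Function.Bijective ψ.rangeRestrict :=
    ⟨fun a b hab ↦ hinj congr(($hab).1), ψ.rangeRestrict_surjective⟩
  set e : O ≃+* ψ.range := RingEquiv.ofBijective ψ.rangeRestrict hbij with he
  refine ⟨p.map e.symm.toRingHom, hmonic.map _, ?_⟩
  have hcomp : ψ.comp e.symm.toRingHom = ψ.range.subtype := by
    ext a
    have : ψ (e.symm a) = ↑(e (e.symm a)) := rfl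
    simp [this]
  rw [eval₂_map, hcomp]
  have : algebraMap (ψ.range) L = ψ.range.subtype := rfl
  rw [← this]
  exact heval

/-- A local subring of a field together with a non-integral element `g` can be dominated by a
valuation subring avoiding `g`. -/
lemma exists_valuationSubring_dominates {L : Type*} [Field L] {A : LocalSubring L} {g : L}
    (hg : g ≠ 0) (hint : ¬ IsIntegral A.toSubring g) :
    ∃ V : ValuationSubring L, A ≤ V.toLocalSubring ∧ g ∉ V := by
  classical
  set S := Algebra.adjoin A.toSubring ({g⁻¹} : Set L) with hSdef
  have hle : A.toSubring ≤ S.toSubring := fun r hr ↦ Subalgebra.algebraMap_mem S ⟨r, hr⟩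
  have htS : g⁻¹ ∈ S := Algebra.self_mem_adjoin_singleton _ _
  set t : S.toSubring := ⟨g⁻¹, htS⟩ with ht
  set J : Ideal S.toSubring :=
    (maximalIdeal A.toSubring).map (Subring.inclusion hle) ⊔ Ideal.span {t} with hJ
  have hJtop : J ≠ ⊤ := by
    intro htop
    have h1 : (1 : S.toSubring) ∈ J := htop ▸ Submodule.mem_top
    rw [hJ, Submodule.mem_sup] at h1
    obtain ⟨m, hm, n, hn, hmn⟩ := h1
    obtain ⟨s, hs⟩ := Ideal.mem_span_singleton'.mp hn
    obtain ⟨p, hp, hp'⟩ := (Algebra.mem_ideal_map_adjoin _ _).mp hm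
    have hs2 : (s : L) ∈ Algebra.adjoin A.toSubring ({g⁻¹} : Set L) := s.2
    rw [Algebra.adjoin_singleton_eq_range_aeval] at hs2
    obtain ⟨q, hq⟩ := hs2
    set r : Polynomial A.toSubring := p + q * X - 1 with hr
    have hr0 : eval₂ (algebraMap A.toSubring L) g⁻¹ r = 0 := by
      have e1 : (m : L) + (n : L) = 1 := by exact_mod_cast congrArg Subtype.val hmn
      have e2 : (n : L) = (s : L) * g⁻¹ := by rw [← hs]; rfl
      have e3 : aeval (g⁻¹ : L) p = (m : L) := hp'
      have e4 : aeval (g⁻¹ : L) q = (s : L) := hq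
      rw [hr, ← aeval_def]
      rw [map_sub, map_add, map_mul, aeval_X, map_one, e3, e4, ← e2]
      rw [e1, sub_self]
    have hcoeff : IsUnit (r.coeff 0) := by
      have h0 : r.coeff 0 = -(1 - p.coeff 0) := by
        simp [hr, coeff_sub, coeff_add, coeff_mul_X_zero]
      rw [h0]
      exact (isUnit_one_sub_self_of_mem_nonunits _ (hp 0)).neg
    have hrne : r ≠ 0 := fun e ↦ by simp [e] at hcoeff
    have hntd : r.natTrailingDegree = 0 := by
      rw [Polynomial.natTrailingDegree_eq_zero]
      exact Or.inr hcoeff.ne_zero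
    have := IsUnit.invertible (isUnit_iff_ne_zero.mpr (inv_ne_zero hg))
    have hrev : eval₂ (algebraMap A.toSubring L) (⅟(g⁻¹)) r.reverse = 0 :=
      (Polynomial.eval₂_reverse_eq_zero_iff _ _ _).mpr hr0
    rw [invOf_eq_right_inv (inv_mul_cancel₀ hg)] at hrev
    refine hint ⟨C (hcoeff.unit⁻¹).1 * r.reverse, ?_, ?_⟩
    · rw [Polynomial.Monic.def, Polynomial.leadingCoeff_mul', Polynomial.reverse_leadingCoeff,
        Polynomial.trailingCoeff, hntd]
      · simp
      · simpa using hrne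
    · rw [eval₂_mul, eval₂_C, hrev, mul_zero]
  obtain ⟨M, hMmax, hJM⟩ := Ideal.exists_le_maximal J hJtop
  set B := LocalSubring.ofPrime S.toSubring M with hB
  have hAB : A ≤ B := by
    refine ⟨hle.trans (LocalSubring.le_ofPrime _ _), ⟨?_⟩⟩
    rintro ⟨a, haA⟩ hunit
    apply (IsLocalization.AtPrime.isUnit_to_map_iff B.toSubring M ⟨a, hle haA⟩).mp at hunit
    by_contra h
    rw [← mem_nonunits_iff, ← mem_maximalIdeal] at h
    exact hunit (hJM (Ideal.mem_sup_left (Ideal.mem_map_of_mem (Subring.inclusion hle) h)))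
  have htB : g⁻¹ ∈ B.toSubring := LocalSubring.le_ofPrime _ _ htS
  have htBnonunit : ¬ IsUnit (⟨g⁻¹, htB⟩ : B.toSubring) := by
    intro hu
    have := (IsLocalization.AtPrime.isUnit_to_map_iff B.toSubring M t).mp hu
    exact this (hJM (Ideal.mem_sup_right (Ideal.mem_span_singleton_self t)))
  obtain ⟨V, hBV⟩ := B.exists_le_valuationSubring
  obtain ⟨hBV1, hBV2⟩ := hBV
  refine ⟨V, hAB.trans ⟨hBV1, hBV2⟩, ?_⟩
  intro hgV
  have hunit : IsUnit (Subring.inclusion hBV1 ⟨g⁻¹, htB⟩) :=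
    isUnit_iff_exists_inv.mpr ⟨⟨g, hgV⟩, Subtype.ext (inv_mul_cancel₀ hg)⟩
  exact htBnonunit (hBV2.1 _ hunit)

/-- An element of the fraction field of an integrally closed local domain `O` that maps into
every valuation subring dominating (the image of) `O` lies in `O`. -/
lemma mem_range_of_forall_valuationSubring {O K L : Type*} [CommRing O] [IsLocalRing O]
    [IsDomain O] [IsIntegrallyClosed O] [Field K] [Field L] [Algebra O K] [IsFractionRing O K]
    (φ : K →+* L) (g : K) (hg : g ≠ 0)
    (hV : ∀ V : ValuationSubring L,
      LocalSubring.range (φ.comp (algebraMap O K)) ≤ V.toLocalSubring → φ g ∈ V) :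
    ∃ a : O, algebraMap O K a = g := by
  by_contra hno
  set ψ : O →+* L := φ.comp (algebraMap O K) with hψ
  have hψinj : Function.Injective ψ := φ.injective.comp (IsFractionRing.injective O K)
  have hrange : (LocalSubring.range ψ).toSubring = ψ.range := LocalSubring.range_toSubring ψ
  have hint : ¬ IsIntegral (LocalSubring.range ψ).toSubring (φ g) := by
    intro h
    have h' : IsIntegral (ψ.range) (φ g) := hrange ▸ h
    obtain ⟨q, hqm, hqe⟩ := isIntegralElem_of_isIntegral_range ψ hψinj h'
    have : IsIntegral O g := by
      refine ⟨q, hqm, ?_⟩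
      apply φ.injective
      rw [map_zero, Polynomial.hom_eval₂]
      exact hqe
    obtain ⟨a, ha⟩ := IsIntegrallyClosed.isIntegral_iff.mp this
    exact hno ⟨a, ha⟩
  have hφg : φ g ≠ 0 := fun e ↦ hg (φ.injective (by simpa using e))
  obtain ⟨V, hAV, hgV⟩ := exists_valuationSubring_dominates hφg hint
  exact hgV (hV V hAV)

end AlgebraAux

section SchemeAux

open IsLocalRing

/-- Compatibility of stalk maps with the induced map on function fields. -/
lemma ffMap_compat (f : Y ⟶ X) (hg : f.base (genericPoint Y) = genericPoint X) (y : Y) :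
    f.stalkMap y ≫ Y.presheaf.stalkSpecializes ((genericPoint_spec Y).specializes trivial) =
      X.presheaf.stalkSpecializes ((genericPoint_spec X).specializes trivial) ≫ ffMap f hg := by
  rw [ffMap, TopCat.Presheaf.stalkCongr_hom, ← Category.assoc]
  erw [TopCat.Presheaf.stalkSpecializes_comp]
  rw [← Scheme.Hom.stalkSpecializes_stalkMap f (genericPoint Y) y
    ((genericPoint_spec Y).specializes trivial)]

lemma ffMap_compat_apply (f : Y ⟶ X) (hg : f.base (genericPoint Y) = genericPoint X) (y : Y)
    (a : X.presheaf.stalk (f.base y)) :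
    algebraMap (Y.presheaf.stalk y) Y.functionField (f.stalkMap y a) =
      ffMap f hg (algebraMap (X.presheaf.stalk (f.base y)) X.functionField a) := by
  have := congrArg (fun (g : X.presheaf.stalk (f.base y) ⟶ Y.functionField) => g a)
    (ffMap_compat f hg y)
  simp only [CommRingCat.comp_apply] at this
  exact this

/-- The key step: if the image of `h ∈ K(X)` in `K(Y)` lies in the image of `𝒪_{Y,y}` for all
`y` above `x`, then `h` lies in the image of `𝒪_{X,x}`.  This uses the valuative criterion of
properness together with the theory of valuation subrings dominating a local subring. -/
lemma key [IsIntegral X] [IsIntegral Y]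
    (hnormal : ∀ x : X, IsIntegrallyClosed (X.presheaf.stalk x))
    (f : Y ⟶ X) [IsProper f]
    (hg : f.base (genericPoint Y) = genericPoint X) (x : X) (h : X.functionField) (hne : h ≠ 0)
    (hy : ∀ y : Y, f.base y = x → ∃ c : Y.presheaf.stalk y,
        algebraMap (Y.presheaf.stalk y) Y.functionField c = ffMap f hg h) :
    ∃ a : X.presheaf.stalk x, algebraMap (X.presheaf.stalk x) X.functionField a = h := by
  have hdom : IsDomain (X.presheaf.stalk x) :=
    (IsFractionRing.injective (X.presheaf.stalk x) X.functionField).isDomain _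
  have hic := hnormal x
  refine mem_range_of_forall_valuationSubring (O := X.presheaf.stalk x)
    (ffMap f hg).hom h hne ?_
  intro V hle
  obtain ⟨hle1, hle2⟩ := hle
  set ψ : X.presheaf.stalk x →+* Y.functionField :=
    (ffMap f hg).hom.comp
      (algebraMap (X.presheaf.stalk x) X.functionField) with hψdef
  set ρ₀ : X.presheaf.stalk x →+* V := ψ.codRestrict V.toSubring
    (fun a => hle1 ⟨a, rfl⟩) with hρ₀
  have hρloc : IsLocalHom ρ₀ :=
    @RingHom.isLocalHom_comp _ _ _ _ _ _ _ _ hle2 (.of_surjective _ ψ.rangeRestrict_surjective)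
  set ρ : X.presheaf.stalk x ⟶ CommRingCat.of ↥V := CommRingCat.ofHom ρ₀ with hρ
  haveI : IsLocalHom ρ.hom := hρloc
  have hcomm : Y.fromSpecStalk (genericPoint Y) ≫ f =
      Spec.map (CommRingCat.ofHom (algebraMap ↥V Y.functionField)) ≫
        (Spec.map ρ ≫ X.fromSpecStalk x) := by
    rw [← Category.assoc, ← Spec.map_comp]
    have e1 : ρ ≫ CommRingCat.ofHom (algebraMap ↥V Y.functionField) =
        X.presheaf.stalkSpecializes ((genericPoint_spec X).specializes trivial) ≫ ffMap f hg :=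
      CommRingCat.hom_ext (RingHom.ext fun a => rfl)
    rw [e1, Spec.map_comp, Category.assoc, Scheme.SpecMap_stalkSpecializes_fromSpecStalk, ffMap,
      show (X.presheaf.stalkCongr (Inseparable.of_eq hg.symm)).hom =
        X.presheaf.stalkSpecializes (Inseparable.of_eq hg).specializes from rfl,
      Spec.map_comp, Category.assoc,
      Scheme.SpecMap_stalkSpecializes_fromSpecStalk, Scheme.SpecMap_stalkMap_fromSpecStalk]
  have hexists : ValuativeCriterion.Existence f := by
    have h1 : (ValuativeCriterion.Existence ⊓ @QuasiCompact) f := by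
      rw [← UniversallyClosed.eq_valuativeCriterion]; infer_instance
    exact h1.1
  haveI : IsLocalRing ↥(CommRingCat.of ↥V) := inferInstanceAs (IsLocalRing ↥V)
  obtain ⟨l, hl1, hl2⟩ :=
    (hexists { R := ↥V, K := ↥(Y.functionField), i₁ := _, i₂ := _, commSq := ⟨hcomm⟩ }).exists_lift
  dsimp only at hl1 hl2
  set y : Y := l.base (closedPoint (CommRingCat.of ↥V)) with hy'
  have hfy : f.base y = x := by
    have e := congrArg (fun (m : Spec (CommRingCat.of ↥V) ⟶ X) =>
      m.base (closedPoint (CommRingCat.of ↥V))) hl2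
    have h2 : (Spec.map ρ ≫ X.fromSpecStalk x) (closedPoint (CommRingCat.of ↥V)) = x := by
      exact (Scheme.Hom.comp_apply ..).trans ((congrArg (fun p => X.fromSpecStalk x p)
        (Spec_closedPoint (f := ρ))).trans Scheme.fromSpecStalk_closedPoint)
    exact e.trans h2
  set τ := Scheme.stalkClosedPointTo l with hτ
  have hcompat : τ ≫ CommRingCat.ofHom V.subtype =
      Y.presheaf.stalkSpecializes ((genericPoint_spec Y).specializes trivial) := by
    rw [← Spec.map_inj, ← cancel_mono (Y.fromSpecStalk y)]
    rw [Spec.map_comp, Category.assoc, Scheme.Spec_stalkClosedPointTo_fromSpecStalk,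
      Scheme.SpecMap_stalkSpecializes_fromSpecStalk]
    exact hl1
  obtain ⟨c, hc⟩ := hy y hfy
  have : ffMap f hg h = V.subtype (τ c) := by
    rw [← hc]
    exact (congrArg (fun (m : Y.presheaf.stalk y ⟶ Y.functionField) => m c) hcompat).symm
  rw [this]
  exact (τ c).2

end SchemeAux

theorem statement4 [IsIntegral X] [IsIntegral Y]
    (hnormal : ∀ x : X, IsIntegrallyClosed (X.presheaf.stalk x))
    (f : Y ⟶ X) [IsProper f] (hsurj : Function.Surjective f.base)
    (hg : f.base (genericPoint Y) = genericPoint X)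
    (D : CartierDiv X) :
    D.IsTrivial ↔ PullbackIsTrivial f hg D := by
  constructor
  · intro htriv y
    obtain ⟨u, hu⟩ := htriv (f.base y)
    refine ⟨Units.map (f.stalkMap y).hom.toMonoidHom u, ?_⟩
    have : ((Units.map (f.stalkMap y).hom.toMonoidHom u : (Y.presheaf.stalk y)ˣ) : Y.presheaf.stalk y) =
        f.stalkMap y (u : X.presheaf.stalk (f.base y)) := rfl
    rw [this, ffMap_compat_apply f hg y, hu]
  · intro hP x
    have hgen0 : ((D.eqn x : X.functionFieldˣ) : X.functionField) ≠ 0 := Units.ne_zero _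
    have h1 : ∃ a : X.presheaf.stalk x,
        algebraMap (X.presheaf.stalk x) X.functionField a = (D.eqn x : X.functionField) := by
      refine key hnormal f hg x _ hgen0 ?_
      intro y hfy
      obtain ⟨u, hu⟩ := hP y
      rw [hfy] at hu
      exact ⟨u, hu⟩
    have h2 : ∃ b : X.presheaf.stalk x,
        algebraMap (X.presheaf.stalk x) X.functionField b = ((D.eqn x : X.functionField))⁻¹ := by
      refine key hnormal f hg x _ (inv_ne_zero hgen0) ?_
      intro y hfy
      obtain ⟨u, hu⟩ := hP y
      rw [hfy] at hu
      refine ⟨((u⁻¹ : (Y.presheaf.stalk y)ˣ) : Y.presheaf.stalk y), ?_⟩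
      have hinv : (ffMap f hg) (((D.eqn x : X.functionField))⁻¹) =
          ((ffMap f hg).hom (D.eqn x : X.functionField))⁻¹ :=
        map_inv₀ (ffMap f hg).hom _
      rw [hinv, ← hu]
      refine eq_inv_of_mul_eq_one_left ?_
      rw [← map_mul]
      simp
    obtain ⟨a, ha⟩ := h1
    obtain ⟨b, hb⟩ := h2
    have hab : a * b = 1 := by
      apply IsFractionRing.injective (X.presheaf.stalk x) X.functionField
      rw [map_mul, ha, hb, map_one, mul_inv_cancel₀ hgen0]
    have hba : b * a = 1 := by rwa [mul_comm] at hab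
    exact ⟨⟨a, b, hab, hba⟩, ha⟩


end

end Statement4
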